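/- For every natural number n, \(\sum_{k=0}^{n} \binom{6n+3}{6k} B_{6k} = 2n+1\). -/

import Mathlib

open Finset

lemma bern_comp (N : ℕ) :
    (Polynomial.bernoulli N).comp (1 + Polynomial.X) =
      Polynomial.bernoulli N + (N : ℚ) • Polynomial.X ^ (N - 1) := by
  apply Polynomial.funext
  intro x
  simp [Polynomial.eval_comp, Polynomial.bernoulli_eval_one_add, smul_eq_mul]

lemma bern_shift (N : ℕ) (z : ℂ) :
    Polynomial.aeval (1 + z) (Polynomial.bernoulli N) =
      Polynomial.aeval z (Polynomial.bernoulli N) + N * z ^ (N - 1) := by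
  have h := congrArg (Polynomial.aeval z (R := ℚ) (A := ℂ)) (bern_comp N)
  rw [Polynomial.aeval_comp] at h
  simpa [Rat.smul_def] using h

lemma bern_aeval_expand (N : ℕ) (z : ℂ) :
    Polynomial.aeval z (Polynomial.bernoulli N) =
      ∑ i ∈ range (N + 1), ((bernoulli i : ℚ) : ℂ) * (N.choose i : ℂ) * z ^ (N - i) := by
  rw [Polynomial.bernoulli, map_sum]
  refine Finset.sum_congr rfl fun i _ => ?_
  simp [Polynomial.aeval_monomial, eq_ratCast]

theorem sum_choose_bernoulli_6k (n : ℕ) :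
    ∑ k ∈ Finset.range (n + 1), (Nat.choose (6 * n + 3) (6 * k) : ℚ) * bernoulli (6 * k) =
      2 * n + 1 := by
  set N := 6 * n + 3 with hN
  have key : ((∑ k ∈ Finset.range (n + 1), (Nat.choose N (6 * k) : ℚ) * bernoulli (6 * k) : ℚ) : ℂ)
      = ((2 * n + 1 : ℚ) : ℂ) → (∑ k ∈ Finset.range (n + 1),
        (Nat.choose N (6 * k) : ℚ) * bernoulli (6 * k) : ℚ) = (2 * n + 1 : ℚ) := by
    exact_mod_cast fun h => h
  refine key ?_
  push_cast
  have hB_N : bernoulli N = 0 := by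
    have h1 : bernoulli N = (-1) ^ N * bernoulli' N := rfl
    rw [h1, bernoulli'_eq_zero_of_odd ⟨3 * n + 1, by omega⟩ (by omega), mul_zero]
  set a : ℕ → ℂ := fun j => ((bernoulli j : ℚ) : ℂ) * (N.choose j : ℂ) with ha
  set g : ℂ → ℂ := fun z => ∑ j ∈ range (N + 1), a j * z ^ j with hg
  set H : ℂ → ℂ := fun z => Polynomial.aeval z (Polynomial.bernoulli N) with hH
  set ζ : ℂ := Complex.exp (2 * Real.pi * Complex.I / 6) with hζdef
  have hζ : IsPrimitiveRoot ζ 6 := Complex.isPrimitiveRoot_exp 6 (by norm_num)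
  have hζ6 : ζ ^ 6 = 1 := hζ.pow_eq_one
  have hζ3 : ζ ^ 3 = -1 := by
    rw [hζdef, ← Complex.exp_nat_mul]
    rw [show (3 : ℕ) * (2 * ↑Real.pi * Complex.I / 6) = ↑Real.pi * Complex.I by
      push_cast; ring]
    exact Complex.exp_pi_mul_I
  have hζ0 : ζ ≠ 0 := fun h => by simp [h] at hζ6
  have hquad : ζ ^ 2 = ζ - 1 := by
    have hne : ζ ≠ -1 := by
      intro h
      have h2 : ζ ^ 2 = 1 := by rw [h]; ring
      have := (hζ.pow_eq_one_iff_dvd 2).mp h2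
      omega
    have h0 : (ζ + 1) * (ζ ^ 2 - ζ + 1) = 0 := by linear_combination hζ3
    rcases mul_eq_zero.mp h0 with h | h
    · exact absurd (by linear_combination h) hne
    · linear_combination h
  have hζ4 : ζ ^ 4 = -ζ := by linear_combination ζ * hζ3
  have hζ5 : ζ ^ 5 = 1 - ζ := by linear_combination ζ ^ 2 * hζ3 - hquad
  have hζN : ζ ^ N = -1 := by
    rw [hN, pow_add, pow_mul, hζ6, one_pow, one_mul, hζ3]
  have hinv : ∀ r : ℕ, r ≤ 6 → (ζ ^ r)⁻¹ = ζ ^ (6 - r) := by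
    intro r hr
    refine inv_eq_of_mul_eq_one_right ?_
    rw [← pow_add, show r + (6 - r) = 6 by omega, hζ6]
  -- filter identity
  have hfilter : ∑ r ∈ range 6, g (ζ ^ r) = 6 * ∑ k ∈ range (n + 1), a (6 * k) := by
    have h1 : ∑ r ∈ range 6, g (ζ ^ r)
        = ∑ j ∈ range (N + 1), a j * ∑ r ∈ range 6, (ζ ^ j) ^ r := by
      rw [hg]
      rw [Finset.sum_comm]
      refine Finset.sum_congr rfl fun j _ => ?_
      rw [Finset.mul_sum]
      refine Finset.sum_congr rfl fun r _ => ?_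
      rw [← pow_mul, ← pow_mul, mul_comm r j]
    rw [h1]
    have h2 : ∀ j : ℕ, (∑ r ∈ range 6, (ζ ^ j) ^ r) = if 6 ∣ j then 6 else 0 := by
      intro j
      by_cases hd : 6 ∣ j
      · rw [if_pos hd, (hζ.pow_eq_one_iff_dvd j).mpr hd]
        simp
      · rw [if_neg hd]
        have hne : ζ ^ j ≠ 1 := fun h => hd ((hζ.pow_eq_one_iff_dvd j).mp h)
        rw [geom_sum_eq hne]
        have h6 : (ζ ^ j) ^ 6 = 1 := by rw [← pow_mul, mul_comm, pow_mul, hζ6, one_pow]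
        rw [h6, sub_self, zero_div]
    have h3 : ∑ j ∈ range (N + 1), a j * (if 6 ∣ j then (6 : ℂ) else 0)
        = ∑ j ∈ (range (N + 1)).filter (fun j => 6 ∣ j), 6 * a j := by
      rw [Finset.sum_filter]
      refine Finset.sum_congr rfl fun j _ => ?_
      by_cases hd : 6 ∣ j <;> simp [hd, mul_comm]
    have h4 : (range (N + 1)).filter (fun j => 6 ∣ j)
        = (range (n + 1)).image (fun k => 6 * k) := by
      ext j
      simp only [mem_filter, mem_range, mem_image]
      constructor
      · rintro ⟨hj, k, rfl⟩
        exact ⟨k, by omega, rfl⟩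
      · rintro ⟨k, hk, rfl⟩
        exact ⟨by omega, ⟨k, rfl⟩⟩
    calc ∑ j ∈ range (N + 1), a j * ∑ r ∈ range 6, (ζ ^ j) ^ r
        = ∑ j ∈ (range (N + 1)).filter (fun j => 6 ∣ j), 6 * a j := by
          rw [← h3]; exact Finset.sum_congr rfl fun j _ => by rw [h2]
      _ = ∑ k ∈ range (n + 1), 6 * a (6 * k) := by
          rw [h4, Finset.sum_image]
          intro x _ y _ h
          simp only at h; omega
      _ = 6 * ∑ k ∈ range (n + 1), a (6 * k) := by rw [Finset.mul_sum]
  -- g z = z ^ N * H z⁻¹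
  have grel : ∀ z : ℂ, z ≠ 0 → g z = z ^ N * H z⁻¹ := by
    intro z hz
    simp only [hg, hH]
    rw [bern_aeval_expand, Finset.mul_sum]
    refine Finset.sum_congr rfl fun i hi => ?_
    have hiN : i ≤ N := Nat.lt_succ_iff.mp (mem_range.mp hi)
    have hzz : z ^ N * z⁻¹ ^ (N - i) = z ^ i := by
      rw [inv_pow, ← pow_sub₀ z hz (Nat.sub_le N i)]
      congr 1
      omega
    calc a i * z ^ i = ((bernoulli i : ℚ) : ℂ) * (N.choose i : ℂ) * (z ^ N * z⁻¹ ^ (N - i)) := by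
          rw [hzz, ha]
      _ = z ^ N * (((bernoulli i : ℚ) : ℂ) * (N.choose i : ℂ) * z⁻¹ ^ (N - i)) := by ring
  have hgr : ∀ r : ℕ, r ≤ 6 → g (ζ ^ r) = (-1 : ℂ) ^ r * H (ζ ^ (6 - r)) := by
    intro r hr
    rw [grel _ (pow_ne_zero r hζ0), hinv r hr]
    congr 1
    rw [← pow_mul, mul_comm, pow_mul, hζN]
  -- H values
  have hH1 : H 1 = 0 := by
    simp only [hH]
    rw [bern_aeval_expand]
    simp only [one_pow, mul_one]
    have hc : (∑ i ∈ range (N + 1), ((bernoulli i : ℚ) : ℂ) * (N.choose i : ℂ))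
        = ((∑ i ∈ range (N + 1), (N.choose i : ℚ) * bernoulli i : ℚ) : ℂ) := by
      push_cast
      exact Finset.sum_congr rfl fun i _ => by ring
    rw [hc]
    norm_cast
    rw [Finset.sum_range_succ, sum_bernoulli, if_neg (by omega : ¬ N = 1), hB_N]
    ring
  have hH0 : H 0 = 0 := by
    simp only [hH]
    rw [bern_aeval_expand]
    have h1 : ∀ i ∈ range N, ((bernoulli i : ℚ) : ℂ) * (N.choose i : ℂ) * (0 : ℂ) ^ (N - i) = 0 := by
      intro i hi
      have := mem_range.mp hi
      rw [zero_pow (by omega), mul_zero]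
    rw [Finset.sum_range_succ, Finset.sum_eq_zero h1, Nat.sub_self, pow_zero, hB_N]
    simp
  have hHm1 : H (-1) = -(N : ℂ) := by
    have h := bern_shift N (-1)
    rw [show (1 : ℂ) + (-1) = 0 by ring] at h
    rw [show (-1 : ℂ) ^ (N - 1) = 1 by rw [show N - 1 = 2 * (3 * n + 1) by omega, pow_mul]; norm_num] at h
    simp only [hH] at hH0 ⊢
    linear_combination hH0 - h
  have hshift2 : H ζ = H (ζ ^ 2) + N * ζ ^ 4 := by
    have h := bern_shift N (ζ ^ 2)
    rw [show (1 : ℂ) + ζ ^ 2 = ζ by linear_combination hquad] at h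
    rw [show (ζ ^ 2) ^ (N - 1) = ζ ^ 4 by
      rw [← pow_mul, show 2 * (N - 1) = 6 * (2 * n) + 4 by omega, pow_add, pow_mul, hζ6, one_pow, one_mul]] at h
    simp only [hH]
    exact h
  have hshift5 : H (ζ ^ 5) = H (ζ ^ 4) + N * ζ ^ 2 := by
    have h := bern_shift N (ζ ^ 4)
    rw [show (1 : ℂ) + ζ ^ 4 = ζ ^ 5 by rw [hζ4, hζ5]; ring] at h
    rw [show (ζ ^ 4) ^ (N - 1) = ζ ^ 2 by
      rw [← pow_mul, show 4 * (N - 1) = 6 * (4 * n + 1) + 2 by omega, pow_add, pow_mul, hζ6, one_pow, one_mul]] at h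
    simp only [hH]
    exact h
  -- final computation
  have hsum : (6 : ℂ) * ∑ k ∈ range (n + 1), a (6 * k) = 2 * (N : ℂ) := by
    rw [← hfilter]
    rw [Finset.sum_range_succ, Finset.sum_range_succ, Finset.sum_range_succ,
      Finset.sum_range_succ, Finset.sum_range_succ, Finset.sum_range_succ,
      Finset.sum_range_zero]
    rw [hgr 0 (by norm_num), hgr 1 (by norm_num), hgr 2 (by norm_num),
      hgr 3 (by norm_num), hgr 4 (by norm_num), hgr 5 (by norm_num)]
    norm_num
    rw [hζ6, hζ3, hH1, hHm1, hshift2, hshift5]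
    rw [hquad, hζ4]
    push_cast
    ring
  have hfin : ∑ k ∈ range (n + 1), a (6 * k) = 2 * (n : ℂ) + 1 := by
    have h6 : (N : ℂ) = 6 * n + 3 := by rw [hN]; push_cast; ring
    linear_combination (1 / 6 : ℂ) * hsum + (1 / 3 : ℂ) * h6
  refine Eq.trans (Finset.sum_congr rfl fun k _ => ?_) hfin
  rw [ha]
  ring
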